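/- Let i, j, k be positive integers and x ∈ {0,1}^ℕ, and set y = τ^i σ^j τ^k(x). Then the words of length 2 occurring in y belong to {00, 01, 10}, and the difference between two successive occurrences in y of any word of length 2 occurring in y is at most 2·max{i,j,k} + 3. In particular, the differences between successive occurrences of 01 and of 10 are at most i+2, and those of 00 are at most 2j+3 if i = 1 and at most 3 if i ≥ 2. The same bound 2·max{i,j,k}+3 holds for y = σ^i τ^j σ^k(x). -/

import Mathlib

namespace DurandLR

variable {A B : Type*}

/-- `u` occurs at position `i` in the one-sided sequence `x`. -/
def OccursAt (x : ℕ → A) (u : List A) (i : ℕ) : Prop :=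
  ∀ k : Fin u.length, x (i + (k : ℕ)) = u.get k

/-- `u` occurs (somewhere) in the one-sided sequence `x`. -/
def Occurs (x : ℕ → A) (u : List A) : Prop := ∃ i, OccursAt x u i

/-- `u` occurs at position `i` in the two-sided sequence `x`. -/
def OccursAtZ (x : ℤ → A) (u : List A) (i : ℤ) : Prop :=
  ∀ k : Fin u.length, x (i + (k : ℕ)) = u.get k

def OccursZ (x : ℤ → A) (u : List A) : Prop := ∃ i, OccursAtZ x u i

/-- The word `u` has exactly `m` occurrences in the finite word `w`. -/
def OccCountEq (u w : List A) (m : ℕ) : Prop :=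
  {i : ℕ | u <+: w.drop i}.ncard = m

/-- `w` is a return word to `u` in the one-sided sequence `x`: `wu` occurs in `x`,
`u` is a prefix of `wu` and `u` has exactly two occurrences in `wu`. -/
def IsReturnWord (x : ℕ → A) (u w : List A) : Prop :=
  Occurs x (w ++ u) ∧ u <+: (w ++ u) ∧ OccCountEq u (w ++ u) 2

/-- `w` is a return word to `u` in the two-sided sequence `x`. -/
def IsReturnWordZ (x : ℤ → A) (u w : List A) : Prop :=
  OccursZ x (w ++ u) ∧ u <+: (w ++ u) ∧ OccCountEq u (w ++ u) 2

/-- `x` is uniformly recurrent: every word occurring in `x` occurs with bounded gaps. -/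
def UniformlyRecurrent (x : ℕ → A) : Prop :=
  ∀ u, Occurs x u → ∃ M : ℕ, ∀ i : ℕ, ∃ j, i ≤ j ∧ j < i + M ∧ OccursAt x u j

def UniformlyRecurrentZ (x : ℤ → A) : Prop :=
  ∀ u, OccursZ x u → ∃ M : ℕ, ∀ i : ℤ, ∃ j : ℤ, i ≤ j ∧ j < i + M ∧ OccursAtZ x u j

/-- `x` is linearly recurrent with constant `K`. -/
def LinearlyRecurrentWith (x : ℕ → A) (K : ℕ) : Prop :=
  UniformlyRecurrent x ∧ ∀ u w, IsReturnWord x u w → w.length ≤ K * u.length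

def LinearlyRecurrent (x : ℕ → A) : Prop := ∃ K, LinearlyRecurrentWith x K

def LinearlyRecurrentZ (x : ℤ → A) : Prop :=
  UniformlyRecurrentZ x ∧ ∃ K : ℕ, ∀ u w, IsReturnWordZ x u w → w.length ≤ K * u.length

/-- The subshift generated by a two-sided sequence `x` : all `z` whose finite subwords
occur in `x`. -/
def SubshiftGenZ (x : ℤ → A) : Set (ℤ → A) := {z | ∀ u, OccursZ z u → OccursZ x u}

/-- The subshift generated by a one-sided sequence `x`. -/
def SubshiftGen (x : ℕ → A) : Set (ℤ → A) := {z | ∀ u, OccursZ z u → Occurs x u}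

/-- A minimal subshift: nonempty and every element generates it. -/
def IsMinimalSubshift (X : Set (ℤ → A)) : Prop :=
  X.Nonempty ∧ ∀ z ∈ X, X = SubshiftGenZ z

/-- A linearly recurrent subshift: minimal and containing an LR sequence. -/
def IsLRSubshift (X : Set (ℤ → A)) : Prop :=
  IsMinimalSubshift X ∧ ∃ x ∈ X, LinearlyRecurrentZ x

def IsPeriodic (z : ℤ → A) : Prop := ∃ p : ℕ, 0 < p ∧ ∀ n : ℤ, z (n + p) = z n

/-- Image of a finite word under a morphism (substitution). -/
def wordMap (σ : A → List B) : List A → List B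
  | [] => []
  | a :: u => σ a ++ wordMap σ u

/-- Composition of two morphisms: `compM σ τ = σ ∘ τ`. -/
def compM (σ τ : A → List A) : A → List A := fun b => wordMap σ (τ b)

/-- Iterate of a morphism: `powM σ n = σ^n`. -/
def powM (σ : A → List A) : ℕ → A → List A
  | 0 => fun b => [b]
  | n + 1 => compM σ (powM σ n)

/-- `chain σ r n = σ_r ∘ σ_{r+1} ∘ ⋯ ∘ σ_{r+n-1}` (the empty composition for `n = 0`). -/
def chain (σ : ℕ → A → List A) (r : ℕ) : ℕ → A → List A
  | 0 => fun b => [b]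
  | n + 1 => fun b => wordMap (chain σ r n) (σ (r + n) b)

/-- The periodic infinite sequence `www⋯` obtained by repeating the word `w`
(with a default letter for the degenerate empty case). -/
def repSeq (w : List A) (d : A) : ℕ → A := fun i => w.getD (i % w.length) d

/-- The prefix of length `n` of the sequence `x`, as a word. -/
def seqTake (x : ℕ → A) (n : ℕ) : List A := (List.range n).map x

/-- `y` is the image of the infinite sequence `z` under the morphism `σ`:
the image of every prefix of `z` is a prefix of `y`. -/
def IsSeqImage (σ : A → List B) (z : ℕ → A) (y : ℕ → B) : Prop :=
  ∀ n, seqTake y (wordMap σ (seqTake z n)).length = wordMap σ (seqTake z n)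

/-- `σ_0 σ_1 ⋯ σ_n (aaa⋯)` converges to `x` in the product topology, where the `n`-th
approximation is the periodic sequence obtained by repeating the word `W n`. -/
def ConvergesTo (W : ℕ → List A) (d : A) (x : ℕ → A) : Prop :=
  ∀ m, ∃ N, ∀ n ≥ N, repSeq (W n) d m = x m

/-- A proper morphism: all images begin with the same letter and end with the same letter. -/
def ProperMorphism (σ : A → List A) : Prop :=
  ∃ l r : A, ∀ b, (σ b).head? = some l ∧ (σ b).getLast? = some r

/-- Primitivity with constant `s₀` of a directive sequence of morphisms
`σ_n : A_{n+1} → A_n^*`: every `b ∈ A_r` occurs in `σ_{r+1} ⋯ σ_{r+s₀} (c)`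
for every `c ∈ A_{r+s₀+1}`. -/
def PrimitiveWith (σ : ℕ → A → List A) (Aseq : ℕ → Set A) (s0 : ℕ) : Prop :=
  ∀ r : ℕ, ∀ b ∈ Aseq r, ∀ c ∈ Aseq (r + s0 + 1), b ∈ chain σ (r + 1) s0 c

/-- The data of an S-adic system: `a` belongs to every alphabet and
`σ_n` maps `A_{n+1}` into words over `A_n`. -/
def SAdicSystem (σ : ℕ → A → List A) (Aseq : ℕ → Set A) (a : A) : Prop :=
  (∀ n, a ∈ Aseq n) ∧ (∀ n, ∀ b ∈ Aseq (n + 1), ∀ c ∈ σ n b, c ∈ Aseq n)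

/-- `x` is the S-adic sequence generated by the directive sequence `σ` and letter `a`:
`σ_0 σ_1 ⋯ σ_n (aaa⋯)` converges to `x`. -/
def GeneratesSAdic (σ : ℕ → A → List A) (Aseq : ℕ → Set A) (a : A) (x : ℕ → A) : Prop :=
  SAdicSystem σ Aseq a ∧ ConvergesTo (fun n => chain σ 0 (n + 1) a) a x

/-- The complexity function `p_x(n)`: the number of distinct words of length `n`
occurring in `x`. -/
noncomputable def complexity (x : ℕ → A) (n : ℕ) : ℕ := {u : List A | u.length = n ∧ Occurs x u}.ncard

/-- Any two successive occurrences of `u` in `x` differ by at most `M`. -/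
def GapsBoundedBy (x : ℕ → A) (u : List A) (M : ℕ) : Prop :=
  ∀ i j, OccursAt x u i → OccursAt x u j → i < j →
    (∀ k, i < k → k < j → ¬ OccursAt x u k) → j - i ≤ M

/-- The finite word `x_{[p,q)}` of a two-sided sequence. -/
def zSeg (x : ℤ → A) (p q : ℤ) : List A := (List.range (q - p).toNat).map fun t => x (p + t)

/-- `w` is a return word to `u.v` in the two-sided sequence `x`: there are two
consecutive occurrences `j < k` of `uv` in `x` with `w = x_{[j+|u|, k+|u|)}`. -/
def IsReturnWordUV (x : ℤ → A) (u v w : List A) : Prop :=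
  ∃ j k : ℤ, OccursAtZ x (u ++ v) j ∧ OccursAtZ x (u ++ v) k ∧ j < k ∧
    (∀ i : ℤ, j < i → i < k → ¬ OccursAtZ x (u ++ v) i) ∧
    w = zSeg x (j + u.length) (k + u.length)

/-- The substitution `σ` on `{a,b,c} = {0,1,2}`: `σ(a)=acb`, `σ(b)=bab`, `σ(c)=cbc`. -/
def sigma3 : Fin 3 → List (Fin 3) := ![[0, 2, 1], [1, 0, 1], [2, 1, 2]]

/-- The substitution `τ` on `{a,b,c} = {0,1,2}`: `τ(a)=abc`, `τ(b)=acb`, `τ(c)=aac`. -/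
def tau3 : Fin 3 → List (Fin 3) := ![[0, 1, 2], [0, 2, 1], [0, 0, 2]]

/-- `rho n = σ τ σ² τ ⋯ σⁿ τ` (identity for `n = 0`). -/
def rho : ℕ → Fin 3 → List (Fin 3)
  | 0 => fun b => [b]
  | n + 1 => compM (rho n) (compM (powM sigma3 (n + 1)) tau3)

/-- `psi n l = σ^{n+2} τ σ^{n+3} τ ⋯ σ^{n+l+1} τ` (identity for `l = 0`). -/
def psi (n : ℕ) : ℕ → Fin 3 → List (Fin 3)
  | 0 => fun b => [b]
  | l + 1 => compM (psi n l) (compM (powM sigma3 (n + 2 + l)) tau3)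

/-- The Sturmian substitution `τ` on `{0,1}`: `τ(0)=0`, `τ(1)=10`. -/
def tau2 : Fin 2 → List (Fin 2) := ![[0], [1, 0]]

/-- The Sturmian substitution `σ` on `{0,1}`: `σ(0)=01`, `σ(1)=1`. -/
def sigma2 : Fin 2 → List (Fin 2) := ![[0, 1], [1]]

/-- `xi i k = τ^{i₁} σ^{i₂} τ^{i₃} ⋯ τ^{i_{2k-1}} σ^{i_{2k}}` (identity for `k = 0`). -/
def xi (i : ℕ → ℕ) : ℕ → Fin 2 → List (Fin 2)
  | 0 => fun b => [b]
  | k + 1 => compM (xi i k) (compM (powM tau2 (i (2 * k + 1))) (powM sigma2 (i (2 * k + 2))))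

/-- `a : ℕ → ℕ` gives (from index 1 on) the continued fraction expansion
`α = [0; a₁, a₂, a₃, …]`, expressed through the Gauss map. -/
def IsCFExpansion (α : ℝ) (a : ℕ → ℕ) : Prop :=
  ∃ β : ℕ → ℝ, β 0 = α ∧ ∀ n : ℕ,
    0 < β n ∧ β n < 1 ∧ (a (n + 1) : ℤ) = ⌊1 / β n⌋ ∧ β (n + 1) = 1 / β n - ⌊1 / β n⌋

section Aux

open List

lemma fin2cases (a : Fin 2) : a = 0 ∨ a = 1 := by omega

lemma getD_replicate' {n s : ℕ} (a d : Fin 2) (h : s < n) :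
    (List.replicate n a).getD s d = a := by
  rw [List.getD_eq_getElem _ _ (by simpa using h)]
  exact List.getElem_replicate _

lemma wordMap_append (σ : A → List B) (u v : List A) :
    wordMap σ (u ++ v) = wordMap σ u ++ wordMap σ v := by
  induction u with
  | nil => rfl
  | cons a u ih => simp [wordMap, ih]

lemma wordMap_wordMap {C : Type*} (f : B → List C) (g : A → List B) (l : List A) :
    wordMap f (wordMap g l) = wordMap (fun a => wordMap f (g a)) l := by
  induction l with
  | nil => rfl
  | cons a l ih => simp [wordMap, wordMap_append, ih]

lemma compM_assoc (f g h : A → List A) : compM (compM f g) h = compM f (compM g h) := by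
  funext b
  exact (wordMap_wordMap f g (h b)).symm

lemma wordMap_replicate (σ : A → List B) (n : ℕ) (a : A) :
    wordMap σ (List.replicate n a) = (List.replicate n (σ a)).flatten := by
  induction n with
  | zero => rfl
  | succ n ih => simp [List.replicate_succ, wordMap, ih]

lemma length_wordMap_ge (g : A → List B) (hg : ∀ a, 0 < (g a).length) (l : List A) :
    l.length ≤ (wordMap g l).length := by
  induction l with
  | nil => simp [wordMap]
  | cons a l ih =>
    have := hg a
    simp only [wordMap, List.length_append, List.length_cons]
    omega

lemma seqTake_length (x : ℕ → A) (n : ℕ) : (seqTake x n).length = n := by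
  simp [seqTake]

lemma seqTake_succ (x : ℕ → A) (n : ℕ) : seqTake x (n + 1) = seqTake x n ++ [x n] := by
  simp [seqTake, List.range_succ]

lemma seqTake_take (x : ℕ → A) {m n : ℕ} (h : m ≤ n) :
    (seqTake x n).take m = seqTake x m := by
  simp [seqTake, ← List.map_take, List.take_range, Nat.min_eq_left h]

lemma seqTake_prefix (x : ℕ → A) {m n : ℕ} (h : m ≤ n) :
    seqTake x m <+: seqTake x n := by
  rw [← seqTake_take x h]; exact List.take_prefix _ _

lemma seqTake_getD (x : ℕ → Fin 2) {N s : ℕ} (hs : s < N) :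
    (seqTake x N).getD s 0 = x s := by
  have hlen : s < (seqTake x N).length := by rwa [seqTake_length]
  rw [List.getD_eq_getElem _ _ hlen]
  simp [seqTake]

lemma wordMap_prefix (g : A → List B) {u w : List A} (h : u <+: w) :
    wordMap g u <+: wordMap g w := by
  obtain ⟨t, rfl⟩ := h
  rw [wordMap_append]; exact List.prefix_append _ _

end Aux

section Aux2

lemma isSeqImage_split (f g : Fin 2 → List (Fin 2)) (hg : ∀ a, 0 < (g a).length)
    (x y : ℕ → Fin 2) (hy : IsSeqImage (compM f g) x y) :
    ∃ z, IsSeqImage g x z ∧ IsSeqImage f z y := by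
  set W : ℕ → List (Fin 2) := fun n => wordMap g (seqTake x n) with hW
  have hWlen : ∀ n, n ≤ (W n).length := fun n => by
    have := length_wordMap_ge g hg (seqTake x n)
    rwa [seqTake_length] at this
  have hWpre : ∀ {m n : ℕ}, m ≤ n → W m <+: W n := fun {m n} h =>
    wordMap_prefix g (seqTake_prefix x h)
  refine ⟨fun m => (W (m + 1)).getD m 0, ?_, ?_⟩ <;>
    set z : ℕ → Fin 2 := fun m => (W (m + 1)).getD m 0 with hz
  all_goals
    have hzW : ∀ {n s : ℕ}, s < n → z s = (W n).getD s 0 := by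
      intro n s hs
      have h1 : s < (W (s + 1)).length := lt_of_lt_of_le (Nat.lt_succ_self s) (hWlen _)
      have h2 : s < (W n).length := lt_of_lt_of_le hs (hWlen n)
      simp only [hz]
      rw [List.getD_eq_getElem _ _ h1, List.getD_eq_getElem _ _ h2]
      exact (hWpre hs).getElem h1
    have hseq : ∀ n, seqTake z n = (W n).take n := by
      intro n
      apply List.ext_getElem
      · simp [seqTake_length, Nat.min_eq_left (hWlen n)]
      · intro s h1 h2
        rw [seqTake_length] at h1
        have : (seqTake z n)[s] = z s := by
          rw [← List.getD_eq_getElem _ (0 : Fin 2), seqTake_getD z h1]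
        rw [this, List.getElem_take, hzW h1, List.getD_eq_getElem]
  · -- IsSeqImage g x z
    intro n
    have h1 : seqTake z (W n).length = (W (W n).length).take (W n).length := hseq _
    have h2 : W n <+: W (W n).length := hWpre (hWlen n)
    rw [List.prefix_iff_eq_take] at h2
    exact h1.trans h2.symm
  · -- IsSeqImage f z y
    intro n
    have hpre : seqTake z n <+: W n := by
      rw [hseq n]; exact List.take_prefix _ _
    have hVU : wordMap f (seqTake z n) <+: wordMap (compM f g) (seqTake x n) := by
      have := wordMap_prefix f hpre
      rwa [hW, wordMap_wordMap] at this
    have hUy := hy n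
    have hlen : (wordMap f (seqTake z n)).length ≤ (wordMap (compM f g) (seqTake x n)).length :=
      hVU.length_le
    have : seqTake y (wordMap f (seqTake z n)).length
        = (seqTake y (wordMap (compM f g) (seqTake x n)).length).take
            (wordMap f (seqTake z n)).length := (seqTake_take y hlen).symm
    rw [this, hUy]
    exact ((List.prefix_iff_eq_take).1 hVU).symm

lemma isSeqImage_blocks (g : Fin 2 → List (Fin 2)) (hg : ∀ a, 0 < (g a).length)
    (v y : ℕ → Fin 2) (hy : IsSeqImage g v y) (m : ℕ) :
    ∃ n p, m = (wordMap g (seqTake v n)).length + p ∧ p < (g (v n)).length ∧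
      ∀ t, t < (g (v n) ++ g (v (n+1)) ++ g (v (n+2)) ++ g (v (n+3))).length →
        y ((wordMap g (seqTake v n)).length + t)
          = (g (v n) ++ g (v (n+1)) ++ g (v (n+2)) ++ g (v (n+3))).getD t 0 := by
  set L : ℕ → ℕ := fun n => (wordMap g (seqTake v n)).length with hL
  have hLsucc : ∀ n, L (n + 1) = L n + (g (v n)).length := by
    intro n
    simp only [hL, seqTake_succ, wordMap_append]
    simp [wordMap]
  have hL0 : L 0 = 0 := by simp [hL, seqTake, wordMap]
  have hfind : ∀ m, ∃ n, L n ≤ m ∧ m < L (n + 1) := by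
    intro m
    induction m with
    | zero => exact ⟨0, by omega, by rw [hLsucc]; have := hg (v 0); omega⟩
    | succ m ih =>
      obtain ⟨n, h1, h2⟩ := ih
      rcases Nat.lt_or_ge (m + 1) (L (n + 1)) with h | h
      · exact ⟨n, by omega, h⟩
      · refine ⟨n + 1, h, ?_⟩
        rw [hLsucc (n+1)]
        have := hg (v (n+1)); omega
  obtain ⟨n, h1, h2⟩ := hfind m
  have h2' := hLsucc n
  refine ⟨n, m - L n, ?_, by omega, ?_⟩
  · show m = L n + (m - L n)
    omega
  intro t ht
  set Wb := g (v n) ++ g (v (n+1)) ++ g (v (n+2)) ++ g (v (n+3)) with hWb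
  have hdecomp : wordMap g (seqTake v (n + 4)) = wordMap g (seqTake v n) ++ Wb := by
    have e4 : seqTake v (n+4) = seqTake v n ++ [v n] ++ [v (n+1)] ++ [v (n+2)] ++ [v (n+3)] := by
      rw [show n+4 = (n+3)+1 by rfl, seqTake_succ, show n+3 = (n+2)+1 by rfl, seqTake_succ,
        show n+2 = (n+1)+1 by rfl, seqTake_succ, seqTake_succ]
    rw [e4]
    simp only [wordMap_append, hWb]
    simp [wordMap, List.append_assoc]
  have hL4 : L (n + 4) = L n + Wb.length := by
    have := congrArg List.length hdecomp
    simpa [hL] using this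
  have hy4 := hy (n + 4)
  have hyval : ∀ s, s < L (n + 4) → y s = (wordMap g (seqTake v (n + 4))).getD s 0 := by
    intro s hs
    rw [← hy4, seqTake_getD y hs]
  have hst : L n + t < L (n + 4) := by omega
  have hrfl : (wordMap g (seqTake v n)).length = L n := rfl
  rw [hyval _ hst, hdecomp, List.getD_append_right _ _ _ _ (by omega)]
  congr 1
  omega

end Aux2

section Aux3

/-- the block `τ^i σ^j (1) = 1 0^i`. -/
def Db (i : ℕ) : List (Fin 2) := 1 :: List.replicate i 0

/-- `(1 0^i)^j`. -/
def Jb (i j : ℕ) : List (Fin 2) := (List.replicate j (Db i)).flatten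

/-- the block `τ^i σ^j (0) = 0 (1 0^i)^j`. -/
def Cb (i j : ℕ) : List (Fin 2) := 0 :: Jb i j

lemma Db_length (i : ℕ) : (Db i).length = i + 1 := by simp [Db]

lemma Jb_length (i j : ℕ) : (Jb i j).length = j * (i + 1) := by
  simp [Jb, List.length_flatten, Db, Function.comp]

lemma Cb_length (i j : ℕ) : (Cb i j).length = j * (i + 1) + 1 := by
  simp [Cb, Jb_length]

lemma Db_getD (i : ℕ) {s : ℕ} (hs : s < i + 1) :
    (Db i).getD s 0 = if s = 0 then 1 else 0 := by
  rcases s with _ | s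
  · simp [Db]
  · simp only [Db, List.getD_cons_succ]
    rw [getD_replicate' _ _ (by omega)]
    simp

lemma Jb_getD (i : ℕ) {j s : ℕ} (hs : s < j * (i + 1)) :
    (Jb i j).getD s 0 = if s % (i + 1) = 0 then 1 else 0 := by
  induction j generalizing s with
  | zero => omega
  | succ j ih =>
    rw [Jb, List.replicate_succ, List.flatten_cons]
    rcases Nat.lt_or_ge s (i + 1) with h | h
    · rw [List.getD_append _ _ _ _ (by rw [Db_length]; omega), Db_getD i h]
      have : s % (i + 1) = s := Nat.mod_eq_of_lt h
      rw [this]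
    · rw [List.getD_append_right _ _ _ _ (by rw [Db_length]; omega), Db_length]
      have h2 : s - (i + 1) < j * (i + 1) := by
        have h3 : s < (j + 1) * (i + 1) := hs
        have hexp : (j + 1) * (i + 1) = j * (i + 1) + (i + 1) := by ring
        omega
      rw [show ((List.replicate j (Db i)).flatten : List (Fin 2)) = Jb i j from rfl, ih h2]
      have : s - (i + 1) + (i + 1) = s := by omega
      conv_rhs => rw [← this, Nat.add_mod_right]

lemma Jb_getD_zero (i : ℕ) {j : ℕ} (hj : 0 < j) : (Jb i j).getD 0 0 = 1 := by
  rw [Jb_getD i (by have : 1 * (i+1) ≤ j * (i+1) := Nat.mul_le_mul_right _ hj; omega)]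
  simp

lemma Cb_getD_zero (i j : ℕ) : (Cb i j).getD 0 0 = 0 := by simp [Cb]

lemma Cb_getD_succ (i j s : ℕ) : (Cb i j).getD (s + 1) 0 = (Jb i j).getD s 0 := by
  simp [Cb]

/-- getD in a 4-fold append, first block. -/
lemma getD4_1 (l1 l2 l3 l4 : List (Fin 2)) {t : ℕ} (h : t < l1.length) :
    (l1 ++ l2 ++ l3 ++ l4).getD t 0 = l1.getD t 0 := by
  rw [List.getD_append _ _ _ _ (by simp; omega), List.getD_append _ _ _ _ (by simp; omega),
    List.getD_append _ _ _ _ h]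

lemma getD4_2 (l1 l2 l3 l4 : List (Fin 2)) {t : ℕ} (h1 : l1.length ≤ t)
    (h2 : t < l1.length + l2.length) :
    (l1 ++ l2 ++ l3 ++ l4).getD t 0 = l2.getD (t - l1.length) 0 := by
  rw [List.getD_append _ _ _ _ (by simp; omega), List.getD_append _ _ _ _ (by simp; omega),
    List.getD_append_right _ _ _ _ h1]

lemma getD4_3 (l1 l2 l3 l4 : List (Fin 2)) {t : ℕ} (h1 : l1.length + l2.length ≤ t)
    (h2 : t < l1.length + l2.length + l3.length) :
    (l1 ++ l2 ++ l3 ++ l4).getD t 0 = l3.getD (t - l1.length - l2.length) 0 := by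
  rw [List.getD_append _ _ _ _ (by simp; omega),
    List.getD_append_right _ _ _ _ (by simp; omega)]
  congr 1
  simp only [List.length_append]; omega

lemma getD4_4 (l1 l2 l3 l4 : List (Fin 2)) {t : ℕ}
    (h1 : l1.length + l2.length + l3.length ≤ t) :
    (l1 ++ l2 ++ l3 ++ l4).getD t 0 = l4.getD (t - l1.length - l2.length - l3.length) 0 := by
  rw [List.getD_append_right _ _ _ _ (by simp; omega)]
  congr 1
  simp only [List.length_append]; omega

lemma len4 (l1 l2 l3 l4 : List (Fin 2)) :
    (l1 ++ l2 ++ l3 ++ l4).length = l1.length + l2.length + l3.length + l4.length := by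
  simp; omega

end Aux3


section Aux4

lemma tau2_0 : tau2 0 = [0] := rfl
lemma tau2_1 : tau2 1 = [1, 0] := rfl
lemma sigma2_0 : sigma2 0 = [0, 1] := rfl
lemma sigma2_1 : sigma2 1 = [1] := rfl

lemma wordMap_tau2_rep (n : ℕ) : wordMap tau2 (List.replicate n 0) = List.replicate n 0 := by
  induction n with
  | zero => rfl
  | succ n ih => simp [List.replicate_succ, wordMap, ih, tau2_0]

lemma wordMap_sigma2_rep (n : ℕ) : wordMap sigma2 (List.replicate n 1) = List.replicate n 1 := by
  induction n with
  | zero => rfl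
  | succ n ih => simp [List.replicate_succ, wordMap, ih, sigma2_1]

lemma powM_tau2_zero (n : ℕ) : powM tau2 n 0 = [0] := by
  induction n with
  | zero => rfl
  | succ n ih => simp [powM, compM, ih, wordMap, tau2_0]

lemma powM_tau2_one (n : ℕ) : powM tau2 n 1 = 1 :: List.replicate n 0 := by
  induction n with
  | zero => rfl
  | succ n ih =>
    simp [powM, compM, ih, wordMap, tau2_0, tau2_1, wordMap_tau2_rep, List.replicate_succ]

lemma powM_sigma2_zero (n : ℕ) : powM sigma2 n 0 = 0 :: List.replicate n 1 := by
  induction n with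
  | zero => rfl
  | succ n ih =>
    simp [powM, compM, ih, wordMap, sigma2_0, sigma2_1, wordMap_sigma2_rep, List.replicate_succ]

lemma powM_sigma2_one (n : ℕ) : powM sigma2 n 1 = [1] := by
  induction n with
  | zero => rfl
  | succ n ih => simp [powM, compM, ih, wordMap, sigma2_1]

lemma nu_zero (i j : ℕ) : compM (powM tau2 i) (powM sigma2 j) 0 = Cb i j := by
  simp only [compM, powM_sigma2_zero, wordMap, powM_tau2_zero, wordMap_replicate, powM_tau2_one]
  simp [Cb, Jb, Db]

lemma nu_one (i j : ℕ) : compM (powM tau2 i) (powM sigma2 j) 1 = Db i := by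
  simp only [compM, powM_sigma2_one, wordMap, powM_tau2_one]
  simp [Db]

lemma Cb_getD_one (i j : ℕ) : (Cb i j).getD 1 0 = (Jb i j).getD 0 0 := rfl

lemma ones_nearby (i j : ℕ) (hi : 0 < i) (hj : 0 < j) (B1 B2 B3 B4 : List (Fin 2))
    (h1 : B1 = Cb i j ∨ B1 = Db i) (h2 : B2 = Cb i j ∨ B2 = Db i)
    (s : ℕ) (hs : s < B1.length) :
    ∃ e, e ≤ i + 1 ∧ s + e < B1.length + B2.length ∧
      (B1 ++ B2 ++ B3 ++ B4).getD (s + e) 0 = 1 := by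
  have hjj : i + 1 ≤ j * (i + 1) := by
    calc i + 1 = 1 * (i + 1) := by ring
    _ ≤ j * (i + 1) := Nat.mul_le_mul_right _ hj
  have hCl := Cb_length i j
  have hDl := Db_length i
  have hB2val : ∀ c : ℕ, (c = 0 ∧ B2 = Db i) ∨ (c = 1 ∧ B2 = Cb i j) →
      (B1 ++ B2 ++ B3 ++ B4).getD (B1.length + c) 0 = 1 := by
    intro c hc
    have hcB2 : c < B2.length := by
      rcases hc with ⟨rfl, rfl⟩ | ⟨rfl, rfl⟩ <;> omega
    rw [getD4_2 _ _ _ _ (by omega) (by omega),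
      show B1.length + c - B1.length = c by omega]
    rcases hc with ⟨rfl, rfl⟩ | ⟨rfl, rfl⟩
    · rfl
    · rw [Cb_getD_one, Jb_getD_zero i hj]
  rcases h1 with rfl | rfl
  · -- B1 = Cb i j
    rw [Cb_length] at hs
    rcases Nat.eq_zero_or_pos s with rfl | hspos
    · refine ⟨1, by omega, ?_, ?_⟩
      · rcases h2 with rfl | rfl <;> omega
      · rw [getD4_1 _ _ _ _ (by omega)]
        simp only [Nat.zero_add]
        rw [Cb_getD_one, Jb_getD_zero i hj]
    · set s' := s - 1 with hs'
      have hs'lt : s' < j * (i + 1) := by omega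
      obtain ⟨q, r', hqr, hr'⟩ : ∃ q r', s' = (i + 1) * q + r' ∧ r' < i + 1 :=
        ⟨s' / (i + 1), s' % (i + 1), by rw [Nat.div_add_mod], Nat.mod_lt _ (by omega)⟩
      have hmul : (i + 1) * (q + 1) = (i + 1) * q + (i + 1) := by ring
      rcases Nat.eq_zero_or_pos r' with hr0 | hr'pos
      · refine ⟨0, by omega, ?_, ?_⟩
        · rcases h2 with rfl | rfl <;> omega
        · rw [getD4_1 _ _ _ _ (by omega), show s + 0 = s' + 1 by omega, Cb_getD_succ,
            Jb_getD i hs'lt]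
          have hm : s' % (i + 1) = 0 := by
            rw [hqr, hr0, Nat.add_zero, Nat.mul_mod_right]
          simp [hm]
      · rcases Nat.lt_or_ge ((i + 1) * (q + 1)) (j * (i + 1)) with hin | hout
        · refine ⟨i + 1 - r', by omega, by omega, ?_⟩
          rw [getD4_1 _ _ _ _ (by omega),
            show s + (i + 1 - r') = ((i + 1) * (q + 1)) + 1 by omega, Cb_getD_succ,
            Jb_getD i hin, Nat.mul_mod_right]
          simp
        · rcases h2 with rfl | rfl
          · refine ⟨j * (i + 1) + 2 - s, by omega, by omega, ?_⟩
            rw [show s + (j * (i + 1) + 2 - s) = (Cb i j).length + 1 by omega]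
            exact hB2val 1 (Or.inr ⟨rfl, rfl⟩)
          · refine ⟨j * (i + 1) + 1 - s, by omega, by omega, ?_⟩
            rw [show s + (j * (i + 1) + 1 - s) = (Cb i j).length + 0 by omega]
            exact hB2val 0 (Or.inl ⟨rfl, rfl⟩)
  · -- B1 = Db i
    rw [Db_length] at hs
    rcases Nat.eq_zero_or_pos s with rfl | hspos
    · refine ⟨0, by omega, ?_, ?_⟩
      · rcases h2 with rfl | rfl <;> omega
      · rw [getD4_1 _ _ _ _ (by omega)]
        rfl
    · rcases h2 with rfl | rfl
      · refine ⟨i + 2 - s, by omega, by omega, ?_⟩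
        rw [show s + (i + 2 - s) = (Db i).length + 1 by omega]
        exact hB2val 1 (Or.inr ⟨rfl, rfl⟩)
      · refine ⟨i + 1 - s, by omega, by omega, ?_⟩
        rw [show s + (i + 1 - s) = (Db i).length + 0 by omega]
        exact hB2val 0 (Or.inl ⟨rfl, rfl⟩)

lemma zeros_after_one (i j : ℕ) (hi : 0 < i) (hj : 0 < j) (B1 B2 B3 B4 : List (Fin 2))
    (h1 : B1 = Cb i j ∨ B1 = Db i) (s t : ℕ) (hs : s < B1.length)
    (hone : (B1 ++ B2 ++ B3 ++ B4).getD s 0 = 1) (ht1 : 1 ≤ t) (ht2 : t ≤ i) :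
    s + t < B1.length ∧ (B1 ++ B2 ++ B3 ++ B4).getD (s + t) 0 = 0 := by
  have hCl := Cb_length i j
  have hDl := Db_length i
  rw [getD4_1 _ _ _ _ hs] at hone
  rcases h1 with rfl | rfl
  · rw [Cb_length] at hs
    rcases Nat.eq_zero_or_pos s with rfl | hspos
    · rw [Cb_getD_zero] at hone
      exact absurd hone (by decide)
    · set s' := s - 1 with hs'
      have hs'lt : s' < j * (i + 1) := by omega
      rw [show s = s' + 1 by omega, Cb_getD_succ, Jb_getD i hs'lt] at hone
      by_cases hmod : s' % (i + 1) = 0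
      swap
      · rw [if_neg hmod] at hone
        exact absurd hone (by decide)
      obtain ⟨q, hq⟩ := Nat.dvd_of_mod_eq_zero hmod
      have hqj : q + 1 ≤ j := by
        by_contra hqj
        have h3 : j * (i + 1) ≤ q * (i + 1) := Nat.mul_le_mul_right _ (by omega)
        have h4 : (i + 1) * q = q * (i + 1) := by ring
        omega
      have hmul : (q + 1) * (i + 1) ≤ j * (i + 1) := Nat.mul_le_mul_right _ hqj
      have hmul2 : (q + 1) * (i + 1) = (i + 1) * q + (i + 1) := by ring
      have hlt : s' + t < j * (i + 1) := by omega
      refine ⟨by omega, ?_⟩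
      rw [getD4_1 _ _ _ _ (by omega), show s + t = (s' + t) + 1 by omega, Cb_getD_succ,
        Jb_getD i hlt]
      have hm : (s' + t) % (i + 1) = t := by
        rw [hq, Nat.mul_add_mod, Nat.mod_eq_of_lt (by omega)]
      rw [hm, if_neg (by omega)]
  · rw [Db_length] at hs
    have hs0 : s = 0 := by
      by_contra hs0
      rw [Db_getD i hs, if_neg hs0] at hone
      exact absurd hone (by decide)
    subst hs0
    refine ⟨by omega, ?_⟩
    rw [getD4_1 _ _ _ _ (by omega), Db_getD i (by omega), if_neg (by omega)]

end Aux4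

section Aux5

lemma occursAt_pair (z : ℕ → Fin 2) (a b : Fin 2) (p : ℕ) :
    OccursAt z [a, b] p ↔ z p = a ∧ z (p + 1) = b := by
  constructor
  · intro h
    have h0 := h ⟨0, by simp⟩
    have h1 := h ⟨1, by simp⟩
    simp at h0 h1
    exact ⟨h0, h1⟩
  · rintro ⟨h1, h2⟩ ⟨kk, hkk⟩
    have : kk = 0 ∨ kk = 1 := by simp at hkk; omega
    rcases this with rfl | rfl <;> simpa

lemma Cb1_getD (j : ℕ) {s : ℕ} (hs : s < j * 2 + 1) :
    (Cb 1 j).getD s 0 = if s % 2 = 0 then 0 else 1 := by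
  rcases s with _ | s'
  · rw [Cb_getD_zero]; simp
  · rw [Cb_getD_succ, Jb_getD 1 (show s' < j * (1 + 1) by omega)]
    by_cases h : s' % 2 = 0
    · rw [if_pos (by omega), if_neg (by omega)]
    · rw [if_neg (by omega), if_pos (by omega)]

lemma master (i j k : ℕ) (hi : 0 < i) (hj : 0 < j) (hk : 0 < k) (x y : ℕ → Fin 2)
    (hy : IsSeqImage (compM (powM tau2 i) (compM (powM sigma2 j) (powM tau2 k))) x y) :
    (∀ m, y m = 1 → y (m + 1) = 0) ∧
    GapsBoundedBy y [0, 1] (i + 2) ∧ GapsBoundedBy y [1, 0] (i + 2) ∧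
    (i = 1 → GapsBoundedBy y [0, 0] (2 * j + 3)) ∧
    (2 ≤ i → GapsBoundedBy y [0, 0] 3) := by
  rw [← compM_assoc] at hy
  obtain ⟨v, hv, hyv⟩ := isSeqImage_split (compM (powM tau2 i) (powM sigma2 j))
    (powM tau2 k)
    (fun a => by
      rcases fin2cases a with rfl | rfl
      · simp [powM_tau2_zero]
      · simp [powM_tau2_one]) x y hy
  set ν := compM (powM tau2 i) (powM sigma2 j) with hνdef
  have hνz : ν 0 = Cb i j := nu_zero i j
  have hνo : ν 1 = Db i := nu_one i j
  have hν : ∀ a : Fin 2, ν a = Cb i j ∨ ν a = Db i := fun a => by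
    rcases fin2cases a with rfl | rfl
    · exact Or.inl hνz
    · exact Or.inr hνo
  have hCl := Cb_length i j
  have hDl := Db_length i
  have hνpos : ∀ a, 0 < (ν a).length := fun a => by
    rcases hν a with h | h <;> rw [h] <;> omega
  have hνlen : ∀ a : Fin 2, (ν a).length = j * (i + 1) + 1 ∨ (ν a).length = i + 1 :=
    fun a => by rcases hν a with h | h <;> rw [h] <;> omega
  have hblk := isSeqImage_blocks ν hνpos v y hyv
  -- v has no adjacent ones
  have V1 : ∀ m, v m = 1 → v (m + 1) = 0 := by
    intro m hvm
    obtain ⟨n, p, hm, hp, hW⟩ := isSeqImage_blocks (powM tau2 k)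
      (fun a => by
        rcases fin2cases a with rfl | rfl
        · simp [powM_tau2_zero]
        · simp [powM_tau2_one]) x v hv m
    have hlen4 := len4 (powM tau2 k (x n)) (powM tau2 k (x (n+1))) (powM tau2 k (x (n+2)))
      (powM tau2 k (x (n+3)))
    rcases fin2cases (x n) with hx | hx
    · rw [hx, powM_tau2_zero] at hp hW
      have hp0 : p = 0 := by simpa using hp
      have := hW 0 (by simp)
      rw [hp0] at hm
      rw [show m = (wordMap (powM tau2 k) (seqTake x n)).length + 0 by omega] at hvm
      rw [this] at hvm
      rw [getD4_1 _ _ _ _ (by simp)] at hvm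
      exact absurd hvm (by decide)
    · rw [hx, powM_tau2_one] at hp hW
      have hlen1 : ((1 : Fin 2) :: List.replicate k 0).length = k + 1 := by simp
      have hlen4' := len4 ((1 : Fin 2) :: List.replicate k 0) (powM tau2 k (x (n+1)))
        (powM tau2 k (x (n+2))) (powM tau2 k (x (n+3)))
      rcases Nat.eq_zero_or_pos p with rfl | hppos
      · -- v (m+1) is the second letter of the block 1 0^k
        have h1 := hW 1 (by omega)
        rw [show m + 1 = (wordMap (powM tau2 k) (seqTake x n)).length + 1 by omega, h1,
          getD4_1 _ _ _ _ (by omega),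
          show ((1 : Fin 2) :: List.replicate k 0).getD 1 0
            = (List.replicate k 0).getD 0 0 from rfl, getD_replicate' _ _ hk]
      · -- then v m would be 0
        exfalso
        have h1 := hW p (by omega)
        rw [show m = (wordMap (powM tau2 k) (seqTake x n)).length + p by omega, h1,
          getD4_1 _ _ _ _ (by omega)] at hvm
        rw [show p = (p - 1) + 1 by omega, List.getD_cons_succ,
          getD_replicate' _ _ (by rw [hlen1] at hp; omega)] at hvm
        exact absurd hvm (by decide)
  -- ones occur in every window of length i+2
  have Y2 : ∀ m, ∃ d, d ≤ i + 1 ∧ y (m + d) = 1 := by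
    intro m
    obtain ⟨n, p, hm, hp, hW⟩ := hblk m
    obtain ⟨e, he1, he2, he3⟩ := ones_nearby i j hi hj (ν (v n)) (ν (v (n+1))) (ν (v (n+2)))
      (ν (v (n+3))) (hν _) (hν _) p hp
    refine ⟨e, he1, ?_⟩
    have hlen4 := len4 (ν (v n)) (ν (v (n+1))) (ν (v (n+2))) (ν (v (n+3)))
    have hval := hW (p + e) (by omega)
    rw [show m + e = (wordMap ν (seqTake v n)).length + (p + e) by omega, hval, he3]
  -- every 1 is followed by at least i zeros
  have Y3 : ∀ m t, y m = 1 → 1 ≤ t → t ≤ i → y (m + t) = 0 := by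
    intro m t hym ht1 ht2
    obtain ⟨n, p, hm, hp, hW⟩ := hblk m
    have hlen4 := len4 (ν (v n)) (ν (v (n+1))) (ν (v (n+2))) (ν (v (n+3)))
    have hym' : (ν (v n) ++ ν (v (n+1)) ++ ν (v (n+2)) ++ ν (v (n+3))).getD p 0 = 1 := by
      rw [← hW p (by omega), show (wordMap ν (seqTake v n)).length + p = m by omega]
      exact hym
    obtain ⟨hz1, hz2⟩ := zeros_after_one i j hi hj _ _ _ _ (hν (v n)) p t hp hym' ht1 ht2
    have hval := hW (p + t) (by omega)
    rw [show m + t = (wordMap ν (seqTake v n)).length + (p + t) by omega, hval, hz2]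
  have M1 : ∀ m, y m = 1 → y (m + 1) = 0 := fun m h => Y3 m 1 h le_rfl hi
  have gapsOf : ∀ (u : List (Fin 2)) (M : ℕ),
      (∀ p, OccursAt y u p → ∃ q, p < q ∧ q ≤ p + M ∧ OccursAt y u q) →
      GapsBoundedBy y u M := by
    intro u M h p q hp hq hpq hno
    obtain ⟨r, h1, h2, h3⟩ := h p hp
    by_contra hC
    exact hno r h1 (by omega) h3
  refine ⟨M1, ?_, ?_, ?_, ?_⟩
  · -- gaps of 01
    refine gapsOf _ _ (fun p hp => ?_)
    rw [occursAt_pair] at hp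
    obtain ⟨h0, h1⟩ := hp
    obtain ⟨d, hd, hd1⟩ := Y2 (p + 2)
    refine ⟨p + 1 + d, by omega, by omega, ?_⟩
    rw [occursAt_pair]
    have h1' : y (p + 1 + d + 1) = 1 := by
      rw [show p + 1 + d + 1 = p + 2 + d by omega]; exact hd1
    refine ⟨?_, h1'⟩
    rcases fin2cases (y (p + 1 + d)) with h | h
    · exact h
    · exact absurd ((M1 _ h).symm.trans h1') (by decide)
  · -- gaps of 10
    refine gapsOf _ _ (fun p hp => ?_)
    rw [occursAt_pair] at hp
    obtain ⟨h0, h1⟩ := hp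
    obtain ⟨d, hd, hd1⟩ := Y2 (p + 1)
    refine ⟨p + 1 + d, by omega, by omega, ?_⟩
    rw [occursAt_pair]
    exact ⟨hd1, M1 _ hd1⟩
  · -- gaps of 00, case i = 1
    rintro rfl
    refine gapsOf _ _ (fun p hp => ?_)
    rw [occursAt_pair] at hp
    obtain ⟨h0, h1⟩ := hp
    obtain ⟨n, pp, hm, hpp, hW⟩ := hblk p
    have hlen4 := len4 (ν (v n)) (ν (v (n+1))) (ν (v (n+2))) (ν (v (n+3)))
    have hB1len : (ν (v n)).length = j * 2 + 1 ∨ (ν (v n)).length = 2 := by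
      rcases hνlen (v n) with h | h <;> omega
    have hB2pos := hνpos (v (n+1))
    have hB3pos := hνpos (v (n+2))
    have hB4pos := hνpos (v (n+3))
    -- the two zeros as getD values
    have hg0 : (ν (v n) ++ ν (v (n+1)) ++ ν (v (n+2)) ++ ν (v (n+3))).getD pp 0 = 0 := by
      rw [← hW pp (by omega), show (wordMap ν (seqTake v n)).length + pp = p by omega]
      exact h0
    have hg1 : (ν (v n) ++ ν (v (n+1)) ++ ν (v (n+2)) ++ ν (v (n+3))).getD (pp + 1) 0 = 0 := by
      rw [← hW (pp + 1) (by omega),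
        show (wordMap ν (seqTake v n)).length + (pp + 1) = p + 1 by omega]
      exact h1
    -- pp is the last position of the first block
    have hlast : pp + 1 = (ν (v n)).length := by
      by_contra hc
      have hlt : pp + 1 < (ν (v n)).length := by omega
      rw [getD4_1 _ _ _ _ (by omega)] at hg0
      rw [getD4_1 _ _ _ _ hlt] at hg1
      rcases hν (v n) with h | h
      · rw [h] at hg0 hg1 hlt
        rw [Cb1_getD j (by omega)] at hg0
        rw [Cb1_getD j (by omega)] at hg1
        by_cases hpar : pp % 2 = 0
        · rw [if_neg (by omega)] at hg1
          exact absurd hg1 (by decide)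
        · rw [if_neg (by omega)] at hg0
          exact absurd hg0 (by decide)
      · rw [h] at hg0 hlt
        rw [Db_length] at hlt
        have : pp = 0 := by omega
        rw [this] at hg0
        have : (Db 1).getD 0 0 = 1 := rfl
        rw [this] at hg0
        exact absurd hg0 (by decide)
    -- the next block starts with 0, i.e. v (n+1) = 0
    have hv1 : v (n + 1) = 0 := by
      rcases fin2cases (v (n + 1)) with h | h
      · exact h
      · exfalso
        rw [getD4_2 _ _ _ _ (by omega) (by omega), show pp + 1 - (ν (v n)).length = 0 by omega,
          h, hνo] at hg1
        have : (Db 1).getD 0 0 = 1 := rfl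
        rw [this] at hg1
        exact absurd hg1 (by decide)
    have hB2 : ν (v (n + 1)) = Cb 1 j := by rw [hv1, hνz]
    have hB2len : (ν (v (n + 1))).length = j * 2 + 1 := by rw [hB2]; omega
    rcases fin2cases (v (n + 2)) with hv2 | hv2
    · -- next 00 at distance 2j+1
      have hB3 : ν (v (n + 2)) = Cb 1 j := by rw [hv2, hνz]
      refine ⟨p + (2 * j + 1), by omega, by omega, ?_⟩
      rw [occursAt_pair]
      constructor
      · have hval := hW (pp + (2 * j + 1)) (by omega)
        rw [show p + (2 * j + 1) = (wordMap ν (seqTake v n)).length + (pp + (2 * j + 1))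
          by omega, hval, getD4_2 _ _ _ _ (by omega) (by omega),
          show pp + (2 * j + 1) - (ν (v n)).length = 2 * j by omega, hB2,
          Cb1_getD j (by omega), if_pos (by omega)]
      · have hval := hW (pp + (2 * j + 2)) (by omega)
        rw [show p + (2 * j + 1) + 1 = (wordMap ν (seqTake v n)).length + (pp + (2 * j + 2))
          by omega, hval, getD4_3 _ _ _ _ (by omega) (by omega),
          show pp + (2 * j + 2) - (ν (v n)).length - (ν (v (n+1))).length = 0 by omega, hB3,
          Cb_getD_zero]
    · -- next 00 at distance 2j+3
      have hB3 : ν (v (n + 2)) = Db 1 := by rw [hv2, hνo]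
      have hB3len : (ν (v (n + 2))).length = 2 := by rw [hB3]; omega
      have hv3 : v (n + 3) = 0 := V1 (n + 2) hv2
      have hB4 : ν (v (n + 3)) = Cb 1 j := by rw [hv3, hνz]
      refine ⟨p + (2 * j + 3), by omega, by omega, ?_⟩
      rw [occursAt_pair]
      constructor
      · have hval := hW (pp + (2 * j + 3)) (by omega)
        rw [show p + (2 * j + 3) = (wordMap ν (seqTake v n)).length + (pp + (2 * j + 3))
          by omega, hval, getD4_3 _ _ _ _ (by omega) (by omega),
          show pp + (2 * j + 3) - (ν (v n)).length - (ν (v (n+1))).length = 1 by omega, hB3]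
        rfl
      · have hval := hW (pp + (2 * j + 4)) (by omega)
        rw [show p + (2 * j + 3) + 1 = (wordMap ν (seqTake v n)).length + (pp + (2 * j + 4))
          by omega, hval, getD4_4 _ _ _ _ (by omega),
          show pp + (2 * j + 4) - (ν (v n)).length - (ν (v (n+1))).length
            - (ν (v (n+2))).length = 0 by omega, hB4, Cb_getD_zero]
  · -- gaps of 00, case 2 ≤ i
    intro hi2
    refine gapsOf _ _ (fun p hp => ?_)
    rw [occursAt_pair] at hp
    obtain ⟨h0, h1⟩ := hp
    rcases fin2cases (y (p + 2)) with h2 | h2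
    · refine ⟨p + 1, by omega, by omega, ?_⟩
      rw [occursAt_pair]
      exact ⟨h1, by rw [show p + 1 + 1 = p + 2 by omega]; exact h2⟩
    · refine ⟨p + 3, by omega, by omega, ?_⟩
      rw [occursAt_pair]
      constructor
      · have := Y3 (p + 2) 1 h2 le_rfl (by omega)
        rwa [show p + 2 + 1 = p + 3 by omega] at this
      · have := Y3 (p + 2) 2 h2 (by omega) (by omega)
        rwa [show p + 2 + 2 = p + 3 + 1 by omega] at this

end Aux5

section Aux6

/-- the letter swap on `{0,1}`. -/
def swp : Fin 2 → Fin 2 := ![1, 0]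

lemma swp_swp (a : Fin 2) : swp (swp a) = a := by fin_cases a <;> rfl

lemma swp_zero : swp 0 = 1 := rfl
lemma swp_one : swp 1 = 0 := rfl

lemma map_swp_swp (l : List (Fin 2)) : (l.map swp).map swp = l := by
  rw [List.map_map]
  have : swp ∘ swp = id := by funext a; simp [Function.comp, swp_swp]
  rw [this, List.map_id]

/-- conjugation of a morphism by the letter swap. -/
def conjM (g : Fin 2 → List (Fin 2)) : Fin 2 → List (Fin 2) := fun a => (g (swp a)).map swp

lemma wordMap_conj (g : Fin 2 → List (Fin 2)) (w : List (Fin 2)) :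
    wordMap (conjM g) w = (wordMap g (w.map swp)).map swp := by
  induction w with
  | nil => rfl
  | cons a w ih => simp [wordMap, conjM, ih, wordMap_append]

lemma conj_compM (f g : Fin 2 → List (Fin 2)) :
    conjM (compM f g) = compM (conjM f) (conjM g) := by
  funext b
  show (wordMap f (g (swp b))).map swp = wordMap (conjM f) ((g (swp b)).map swp)
  rw [wordMap_conj, map_swp_swp]

lemma conj_powM (g : Fin 2 → List (Fin 2)) (n : ℕ) :
    conjM (powM g n) = powM (conjM g) n := by
  induction n with
  | zero =>
    funext b
    show ([swp b]).map swp = [b]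
    simp [swp_swp]
  | succ n ih =>
    show conjM (compM g (powM g n)) = compM (conjM g) (powM (conjM g) n)
    rw [conj_compM, ih]

lemma conj_tau : conjM tau2 = sigma2 := by
  funext a; fin_cases a <;> decide

lemma conj_sigma : conjM sigma2 = tau2 := by
  funext a; fin_cases a <;> decide

lemma seqTake_map (x : ℕ → Fin 2) (n : ℕ) :
    seqTake (swp ∘ x) n = (seqTake x n).map swp := by
  simp [seqTake, List.map_map]

lemma isSeqImage_conj (g : Fin 2 → List (Fin 2)) (x y : ℕ → Fin 2)
    (h : IsSeqImage g x y) : IsSeqImage (conjM g) (swp ∘ x) (swp ∘ y) := by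
  intro n
  rw [wordMap_conj, seqTake_map x n, map_swp_swp, List.length_map, seqTake_map y, h n]

lemma occursAt_swap (z : ℕ → Fin 2) (a b : Fin 2) (p : ℕ) :
    OccursAt (swp ∘ z) [swp a, swp b] p ↔ OccursAt z [a, b] p := by
  rw [occursAt_pair, occursAt_pair]
  have hinj : ∀ u v : Fin 2, swp u = swp v → u = v := by decide
  constructor
  · rintro ⟨h1, h2⟩
    exact ⟨hinj _ _ h1, hinj _ _ h2⟩
  · rintro ⟨h1, h2⟩
    exact ⟨by simp [Function.comp, h1], by simp [Function.comp, h2]⟩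

lemma gaps_swap (z : ℕ → Fin 2) (a b : Fin 2) (M : ℕ)
    (h : GapsBoundedBy (swp ∘ z) [swp a, swp b] M) : GapsBoundedBy z [a, b] M := by
  intro p q hp hq hpq hno
  exact h p q ((occursAt_swap z a b p).2 hp) ((occursAt_swap z a b q).2 hq) hpq
    (fun r h1 h2 hocc => hno r h1 h2 ((occursAt_swap z a b r).1 hocc))

lemma gaps_mono (z : ℕ → Fin 2) (u : List (Fin 2)) {M M' : ℕ} (h : M ≤ M')
    (hg : GapsBoundedBy z u M) : GapsBoundedBy z u M' :=
  fun p q a b c d => le_trans (hg p q a b c d) h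

end Aux6

/-- For positive `i, j, k` and `y = τ^i σ^j τ^k(x)`: the words of length 2 occurring in
`y` belong to `{00, 01, 10}` and occur with gaps at most `2·max{i,j,k}+3`; more
precisely the gaps of `01` and `10` are at most `i+2`, and those of `00` are at most
`2j+3` if `i = 1` and at most `3` if `i ≥ 2`. The same bound `2·max{i,j,k}+3` holds
for `y' = σ^i τ^j σ^k(x)`. -/

theorem sturmian_block_gaps (i j k : ℕ) (hi : 0 < i) (hj : 0 < j) (hk : 0 < k)
    (x y : ℕ → Fin 2)
    (hy : IsSeqImage (compM (powM tau2 i) (compM (powM sigma2 j) (powM tau2 k))) x y) :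
    (∀ u : List (Fin 2), u.length = 2 → Occurs y u →
        u ∈ ({[0, 0], [0, 1], [1, 0]} : Set (List (Fin 2)))) ∧
    (∀ u : List (Fin 2), u.length = 2 → Occurs y u →
        GapsBoundedBy y u (2 * max i (max j k) + 3)) ∧
    GapsBoundedBy y [0, 1] (i + 2) ∧
    GapsBoundedBy y [1, 0] (i + 2) ∧
    (i = 1 → GapsBoundedBy y [0, 0] (2 * j + 3)) ∧
    (2 ≤ i → GapsBoundedBy y [0, 0] 3) ∧
    (∀ y' : ℕ → Fin 2,
        IsSeqImage (compM (powM sigma2 i) (compM (powM tau2 j) (powM sigma2 k))) x y' →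
        ∀ u : List (Fin 2), u.length = 2 → Occurs y' u →
          GapsBoundedBy y' u (2 * max i (max j k) + 3)) := by
  obtain ⟨M1, G01, G10, G001, G002⟩ := master i j k hi hj hk x y hy
  have hmax1 : i ≤ max i (max j k) := le_max_left _ _
  have hmax2 : j ≤ max i (max j k) := le_trans (le_max_left _ _) (le_max_right _ _)
  refine ⟨?_, ?_, G01, G10, G001, G002, ?_⟩
  · intro u hu2 hocc
    obtain ⟨a, b, rfl⟩ := List.length_eq_two.1 hu2
    obtain ⟨p, hp⟩ := hocc
    rw [occursAt_pair] at hp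
    rcases fin2cases a with rfl | rfl <;> rcases fin2cases b with rfl | rfl
    · simp
    · simp
    · simp
    · exact absurd ((M1 p hp.1).symm.trans hp.2) (by decide)
  · intro u hu2 hocc
    obtain ⟨a, b, rfl⟩ := List.length_eq_two.1 hu2
    rcases fin2cases a with rfl | rfl <;> rcases fin2cases b with rfl | rfl
    · rcases Nat.lt_or_ge i 2 with h | h
      · exact gaps_mono _ _ (by omega) (G001 (by omega))
      · exact gaps_mono _ _ (by omega) (G002 h)
    · exact gaps_mono _ _ (by omega) G01
    · exact gaps_mono _ _ (by omega) G10
    · obtain ⟨p, hp⟩ := hocc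
      rw [occursAt_pair] at hp
      exact absurd ((M1 p hp.1).symm.trans hp.2) (by decide)
  · intro y' hy' u hu2 hocc
    have hconj := isSeqImage_conj _ _ _ hy'
    have heq : conjM (compM (powM sigma2 i) (compM (powM tau2 j) (powM sigma2 k)))
        = compM (powM tau2 i) (compM (powM sigma2 j) (powM tau2 k)) := by
      rw [conj_compM, conj_compM, conj_powM, conj_powM, conj_powM, conj_sigma, conj_tau]
    rw [heq] at hconj
    obtain ⟨M1', G01', G10', G001', G002'⟩ := master i j k hi hj hk (swp ∘ x) (swp ∘ y') hconj
    obtain ⟨a, b, rfl⟩ := List.length_eq_two.1 hu2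
    refine gaps_swap y' a b _ ?_
    rcases fin2cases a with rfl | rfl <;> rcases fin2cases b with rfl | rfl <;>
      simp only [swp_zero, swp_one]
    · -- swapped word [1,1] : cannot occur
      obtain ⟨p, hp⟩ := hocc
      have hp' := (occursAt_swap y' 0 0 p).2 hp
      simp only [swp_zero] at hp'
      rw [occursAt_pair] at hp'
      exact absurd ((M1' p hp'.1).symm.trans hp'.2) (by decide)
    · exact gaps_mono _ _ (by omega) G10'
    · exact gaps_mono _ _ (by omega) G01'
    · rcases Nat.lt_or_ge i 2 with h | h
      · exact gaps_mono _ _ (by omega) (G001' (by omega))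
      · exact gaps_mono _ _ (by omega) (G002' h)

end DurandLR
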